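/- For every natural number q ≥ 1, ∫_0^1 ln(t^(-1/q) - 1) dt = -H_{q-1}, where H_{q-1} = Σ_{k=1}^{q-1} 1/k (with H_0 = 0). -/

import Mathlib

open MeasureTheory Real Set

namespace IFAux

/-- partial sum ∑ u^{k+1}/(k+1) with u = t^{1/q} -/
noncomputable def S (q : ℕ) (t : ℝ) : ℝ :=
  ∑ k ∈ Finset.range q, (t ^ (1 / (q : ℝ))) ^ (k + 1) / ((k : ℝ) + 1)

/-- continuous-on-[0,1] antiderivative of log(1 - t^{1/q}) -/
noncomputable def R1 (q : ℕ) (t : ℝ) : ℝ :=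
  -(∑ k ∈ Finset.range q, (t ^ (1 / (q : ℝ))) ^ k) *
      ((1 - t ^ (1 / (q : ℝ))) * Real.log (1 - t ^ (1 / (q : ℝ)))) - S q t

/-- simple form of the antiderivative, equal to `R1` for `t > 0` -/
noncomputable def A1 (q : ℕ) (t : ℝ) : ℝ :=
  (t - 1) * Real.log (1 - t ^ (1 / (q : ℝ))) - S q t

/-- antiderivative of -log t -/
noncomputable def A2 (t : ℝ) : ℝ := t - t * Real.log t

variable {q : ℕ}

lemma hc (hq : 1 ≤ q) : 0 < 1 / (q : ℝ) := by positivity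

lemma hut (hq : 1 ≤ q) {t : ℝ} (ht : 0 ≤ t) : (t ^ (1 / (q : ℝ))) ^ q = t := by
  rw [← Real.rpow_natCast (t ^ (1 / (q : ℝ))) q, ← Real.rpow_mul ht]
  have hq0 : (q : ℝ) ≠ 0 := by positivity
  rw [one_div, inv_mul_cancel₀ hq0, Real.rpow_one]

lemma A1_eq_R1 (hq : 1 ≤ q) {t : ℝ} (ht : 0 ≤ t) : A1 q t = R1 q t := by
  have h := geom_sum_mul (t ^ (1 / (q : ℝ))) q
  rw [hut hq ht] at h
  unfold A1 R1
  have : (t - 1) = -(∑ k ∈ Finset.range q, (t ^ (1 / (q : ℝ))) ^ k) * (1 - t ^ (1 / (q : ℝ))) := by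
    linear_combination -h
  rw [this]; ring

lemma hasDerivAt_A1 (hq : 1 ≤ q) {t : ℝ} (ht : t ∈ Set.Ioo (0:ℝ) 1) :
    HasDerivAt (A1 q) (Real.log (1 - t ^ (1 / (q : ℝ)))) t := by
  obtain ⟨ht0, ht1⟩ := ht
  set c : ℝ := 1 / (q : ℝ) with hcdef
  have hcpos : 0 < c := hc hq
  have hu0 : 0 < t ^ c := Real.rpow_pos_of_pos ht0 c
  have hu1 : t ^ c < 1 := Real.rpow_lt_one ht0.le ht1 hcpos
  have h1u : (1 : ℝ) - t ^ c ≠ 0 := by linarith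
  have h1 : HasDerivAt (fun t : ℝ => t ^ c) (c * t ^ (c - 1)) t :=
    Real.hasDerivAt_rpow_const (Or.inl ht0.ne')
  have h2 : HasDerivAt (fun t : ℝ => 1 - t ^ c) (-(c * t ^ (c - 1))) t := by
    simpa using (hasDerivAt_const t (1:ℝ)).fun_sub h1
  have h3 : HasDerivAt (fun t : ℝ => Real.log (1 - t ^ c))
      (-(c * t ^ (c - 1)) / (1 - t ^ c)) t := h2.log h1u
  have h4 : HasDerivAt (fun t : ℝ => (t - 1) * Real.log (1 - t ^ c))
      (1 * Real.log (1 - t ^ c) + (t - 1) * (-(c * t ^ (c - 1)) / (1 - t ^ c))) t :=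
    ((hasDerivAt_id t).sub_const 1).mul h3
  have h5 : ∀ k ∈ Finset.range q, HasDerivAt (fun t : ℝ => (t ^ c) ^ (k + 1) / ((k : ℝ) + 1))
      ((t ^ c) ^ k * (c * t ^ (c - 1))) t := by
    intro k _
    have := (h1.pow (k + 1)).div_const ((k : ℝ) + 1)
    have hk : ((k : ℝ) + 1) ≠ 0 := by positivity
    refine this.congr_deriv ?_
    push_cast
    field_simp
  have h6 : HasDerivAt (S q) (∑ k ∈ Finset.range q, (t ^ c) ^ k * (c * t ^ (c - 1))) t :=
    HasDerivAt.fun_sum h5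
  have h7 := h4.fun_sub h6
  refine h7.congr_deriv ?_
  have hgeom : (∑ k ∈ Finset.range q, (t ^ c) ^ k) * (1 - t ^ c) = 1 - t := by
    have h := geom_sum_mul (t ^ c) q
    rw [hut hq ht0.le] at h
    linear_combination -h
  have hsum : (∑ k ∈ Finset.range q, (t ^ c) ^ k) = (1 - t)/(1 - t ^ c) :=
    (eq_div_iff h1u).2 hgeom
  rw [← Finset.sum_mul, hsum]
  field_simp
  ring

lemma hasDerivAt_R1 (hq : 1 ≤ q) {t : ℝ} (ht : t ∈ Set.Ioo (0:ℝ) 1) :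
    HasDerivAt (R1 q) (Real.log (1 - t ^ (1 / (q : ℝ)))) t := by
  refine (hasDerivAt_A1 hq ht).congr_of_eventuallyEq ?_
  filter_upwards [Ioi_mem_nhds ht.1] with x hx
  exact (A1_eq_R1 hq (le_of_lt hx)).symm

lemma contOn_R1 (hq : 1 ≤ q) : ContinuousOn (R1 q) (Set.Icc 0 1) := by
  have hu : ContinuousOn (fun t : ℝ => t ^ (1 / (q : ℝ))) (Set.Icc 0 1) :=
    continuousOn_id.rpow_const (fun x _ => Or.inr (hc hq).le)
  have hS : ContinuousOn (S q) (Set.Icc 0 1) := by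
    apply continuousOn_finset_sum
    intro k _
    exact (hu.pow (k + 1)).div_const _
  have hsum : ContinuousOn (fun t : ℝ => ∑ k ∈ Finset.range q, (t ^ (1 / (q : ℝ))) ^ k)
      (Set.Icc 0 1) := continuousOn_finset_sum _ fun k _ => hu.pow k
  have hml : ContinuousOn
      (fun t : ℝ => (1 - t ^ (1 / (q : ℝ))) * Real.log (1 - t ^ (1 / (q : ℝ))))
      (Set.Icc 0 1) :=
    Real.continuous_mul_log.comp_continuousOn (continuousOn_const.sub hu)
  exact (hsum.neg.mul hml).sub hS

lemma int_g1 (hq : 1 ≤ q) :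
    IntervalIntegrable (fun t : ℝ => Real.log (1 - t ^ (1 / (q : ℝ)))) volume 0 1 := by
  rw [intervalIntegrable_iff_integrableOn_Ioc_of_le zero_le_one]
  have h := intervalIntegral.integrableOn_deriv_of_nonneg (g := fun t => -R1 q t)
    (g' := fun t : ℝ => -Real.log (1 - t ^ (1 / (q : ℝ)))) (contOn_R1 hq).neg
    (fun t ht => (hasDerivAt_R1 hq ht).neg)
    (fun t ht => by
      have hu1 : t ^ (1 / (q : ℝ)) < 1 := Real.rpow_lt_one ht.1.le ht.2 (hc hq)
      have hu0 : 0 < t ^ (1 / (q : ℝ)) := Real.rpow_pos_of_pos ht.1 _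
      have : Real.log (1 - t ^ (1 / (q : ℝ))) ≤ 0 :=
        Real.log_nonpos (by linarith) (by linarith)
      linarith)
  have h2 : (fun t : ℝ => Real.log (1 - t ^ (1 / (q : ℝ)))) =
      fun t : ℝ => -(-Real.log (1 - t ^ (1 / (q : ℝ)))) := by
    funext t; rw [neg_neg]
  rw [h2]
  exact h.neg

lemma hasDerivAt_A2 {t : ℝ} (ht : t ≠ 0) : HasDerivAt A2 (-Real.log t) t := by
  have h := (hasDerivAt_id t).mul (Real.hasDerivAt_log ht)
  have h2 := (hasDerivAt_id t).sub h
  refine h2.congr_deriv ?_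
  field_simp
  simp only [id]
  ring

lemma contOn_A2 : Continuous A2 := continuous_id.sub Real.continuous_mul_log

lemma int_g2 : IntervalIntegrable (fun t : ℝ => -Real.log t) volume 0 1 := by
  rw [intervalIntegrable_iff_integrableOn_Ioc_of_le zero_le_one]
  exact intervalIntegral.integrableOn_deriv_of_nonneg contOn_A2.continuousOn
    (fun t ht => hasDerivAt_A2 ht.1.ne')
    (fun t ht => by
      have : Real.log t ≤ 0 := Real.log_nonpos ht.1.le ht.2.le
      linarith)

lemma key1 (hq : 1 ≤ q) :
    ∫ t in (0:ℝ)..1, Real.log (1 - t ^ (1 / (q : ℝ))) =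
      -∑ k ∈ Finset.range q, (1 : ℝ) / (k + 1) := by
  have h := intervalIntegral.integral_eq_sub_of_hasDeriv_right_of_le zero_le_one (contOn_R1 hq)
    (fun t ht => (hasDerivAt_R1 hq ht).hasDerivWithinAt) (int_g1 hq)
  rw [h]
  have h1 : R1 q 1 = -∑ k ∈ Finset.range q, (1 : ℝ) / (k + 1) := by
    unfold R1 S
    simp [Real.one_rpow, one_div]
  have h0 : R1 q 0 = 0 := by
    unfold R1 S
    rw [Real.zero_rpow (hc hq).ne']
    simp
  rw [h1, h0]; ring

lemma key2 : ∫ t in (0:ℝ)..1, -Real.log t = 1 := by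
  have h := intervalIntegral.integral_eq_sub_of_hasDeriv_right_of_le zero_le_one
    contOn_A2.continuousOn
    (fun t ht => (hasDerivAt_A2 ht.1.ne').hasDerivWithinAt) int_g2
  rw [h]
  simp [A2]

end IFAux

open MeasureTheory Real

/-- `∫₀¹ ln(t^{-1/q} - 1) dt = -H_{q-1}` for a positive integer `q`. -/
theorem integral_log_rpow_sub_one (q : ℕ) (hq : 1 ≤ q) :
    ∫ t in (0:ℝ)..1, Real.log (t ^ (-1 / (q : ℝ)) - 1) =
      -∑ k ∈ Finset.range (q - 1), (1 : ℝ) / (k + 1) := by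
  have hcq : 0 < 1 / (q : ℝ) := IFAux.hc hq
  have heq : Set.EqOn (fun t : ℝ => Real.log (t ^ (-1 / (q : ℝ)) - 1))
      (fun t : ℝ => Real.log (1 - t ^ (1 / (q : ℝ))) + (1 / (q : ℝ)) * (-Real.log t))
      (Set.uIcc 0 1) := by
    rw [Set.uIcc_of_le zero_le_one]
    rintro t ⟨ht0, ht1⟩
    rcases eq_or_lt_of_le ht0 with h0 | h0
    · rw [← h0]
      simp only [Real.zero_rpow (show (1 : ℝ) / q ≠ 0 by positivity),
        Real.zero_rpow (show -1 / (q:ℝ) ≠ 0 by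
          rw [neg_div]; exact neg_ne_zero.mpr (by positivity))]
      simp [Real.log_neg_eq_log]
    · rcases eq_or_lt_of_le ht1 with h1 | h1
      · simp [h1, Real.one_rpow]
      · have hu0 : 0 < t ^ (1 / (q : ℝ)) := Real.rpow_pos_of_pos h0 _
        have hu1 : t ^ (1 / (q : ℝ)) < 1 := Real.rpow_lt_one ht0 h1 hcq
        have hrw : t ^ (-1 / (q : ℝ)) - 1 =
            (1 - t ^ (1 / (q : ℝ))) / (t ^ (1 / (q : ℝ))) := by
          rw [neg_div, Real.rpow_neg ht0]
          field_simp
        simp only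
        rw [hrw, Real.log_div (by linarith) hu0.ne', Real.log_rpow h0]
        ring
  rw [intervalIntegral.integral_congr heq,
    intervalIntegral.integral_add (IFAux.int_g1 hq) (IFAux.int_g2.const_mul _),
    intervalIntegral.integral_const_mul, IFAux.key1 hq, IFAux.key2]
  obtain ⟨m, rfl⟩ : ∃ m, q = m + 1 := ⟨q - 1, (Nat.succ_pred_eq_of_pos hq).symm⟩
  rw [Finset.sum_range_succ]
  push_cast
  ring_nf
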